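/- Let u : [t₀, ∞) → ℝ be continuous with u(t) ≥ u₀ > 0, a : [t₀, ∞) → ℝ bounded continuous, p : [t₀, ∞) → ℝ^m continuous with p(t) → 0, and let Q : [t₀, ∞) → ℝ^m be the C¹ solution of Q'(t) + (u(t)/t)Q(t) = (a(t)/t)p(t) with Q(t₀) = 0 (t₀ > 0). Then Q(t) → 0 as t → ∞. -/

import Mathlib

open Filter Topology intervalIntegral

theorem stmt_17 {m : ℕ} (t₀ u₀ : ℝ) (ht₀ : 0 < t₀) (hu₀ : 0 < u₀)
    (u a : ℝ → ℝ) (p Q Q' : ℝ → EuclideanSpace ℝ (Fin m))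
    (huc : ContinuousOn u (Set.Ici t₀))
    (hub : ∀ t ∈ Set.Ici t₀, u₀ ≤ u t)
    (hac : ContinuousOn a (Set.Ici t₀))
    (habdd : ∃ Ca, ∀ t ∈ Set.Ici t₀, |a t| ≤ Ca)
    (hpc : ContinuousOn p (Set.Ici t₀))
    (hp0 : Tendsto p atTop (nhds 0))
    (hQ : ∀ t ∈ Set.Ici t₀, HasDerivAt Q (Q' t) t)
    (hode : ∀ t ∈ Set.Ici t₀, Q' t + (u t / t) • Q t = (a t / t) • p t)
    (hQ0 : Q t₀ = 0) :
    Tendsto Q atTop (nhds 0) := by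
  obtain ⟨Ca, hCa⟩ := habdd
  have hCa0 : 0 ≤ Ca := le_trans (abs_nonneg _) (hCa t₀ (Set.mem_Ici.mpr le_rfl))
  have hmax : ∀ s : ℝ, 0 < max s t₀ := fun s => lt_of_lt_of_le ht₀ (le_max_right _ _)
  have hmaxmem : ∀ s : ℝ, max s t₀ ∈ Set.Ici t₀ := fun s => Set.mem_Ici.mpr (le_max_right _ _)
  have hmaxc : Continuous fun s : ℝ => max s t₀ := continuous_id.max continuous_const
  -- extended coefficient g s = u s / s for s ≥ t₀
  set g : ℝ → ℝ := fun s => u (max s t₀) / max s t₀ with hgdef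
  have hgc : Continuous g :=
    (huc.comp_continuous hmaxc hmaxmem).div hmaxc fun s => (hmax s).ne'
  have hgeq : ∀ s ∈ Set.Ici t₀, g s = u s / s := by
    intro s hs; simp only [hgdef, max_eq_left (Set.mem_Ici.mp hs)]
  -- integrating factor
  set v : ℝ → ℝ := fun t => ∫ s in t₀..t, g s with hvdef
  have hvd : ∀ t : ℝ, HasDerivAt v (g t) t := fun t =>
    (hgc.integral_hasStrictDerivAt t₀ t).hasDerivAt
  set R : ℝ → ℝ := fun t => Real.exp (v t) with hRdef
  have hRpos : ∀ t, 0 < R t := fun t => Real.exp_pos _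
  have hRd : ∀ t : ℝ, HasDerivAt R (Real.exp (v t) * g t) t := fun t => (hvd t).exp
  -- right-hand side, extended
  set h : ℝ → EuclideanSpace ℝ (Fin m) :=
    fun s => R s • ((a (max s t₀) / max s t₀) • p (max s t₀)) with hhdef
  have hvc : Continuous v := continuous_iff_continuousAt.mpr fun t => (hvd t).continuousAt
  have hRc : Continuous R := Real.continuous_exp.comp hvc
  have hhc : Continuous h := by
    apply hRc.smul
    exact (((hac.comp_continuous hmaxc hmaxmem).div hmaxc fun s => (hmax s).ne').smul
      (hpc.comp_continuous hmaxc hmaxmem))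
  have hheq : ∀ s ∈ Set.Ici t₀, h s = R s • ((a s / s) • p s) := by
    intro s hs; simp only [hhdef, max_eq_left (Set.mem_Ici.mp hs)]
  -- derivative of R • Q
  have hFd : ∀ s ∈ Set.Ici t₀, HasDerivAt (fun t => R t • Q t) (h s) s := by
    intro s hs
    have := (hRd s).smul (hQ s hs)
    have heq : R s • Q' s + (Real.exp (v s) * g s) • Q s = h s := by
      rw [hheq s hs, hgeq s hs, ← hode s hs]
      simp only [hRdef, smul_add, smul_smul]
    rwa [heq] at this
  -- FTC: R t • Q t = ∫_{t₀}^t h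
  have hFTC : ∀ t ∈ Set.Ici t₀, R t • Q t = ∫ s in t₀..t, h s := by
    intro t ht
    have hsub : Set.uIcc t₀ t ⊆ Set.Ici t₀ := by
      rw [Set.uIcc_of_le ht]; exact Set.Icc_subset_Ici_self
    have := integral_eq_sub_of_hasDerivAt (fun s hs => hFd s (hsub hs))
      (hhc.intervalIntegrable t₀ t)
    rw [hQ0, smul_zero, sub_zero] at this
    exact this.symm
  -- v grows at least like u₀ * log(t/t₀)
  have hvge : ∀ t ∈ Set.Ici t₀, u₀ * (Real.log t - Real.log t₀) ≤ v t := by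
    intro t ht
    have hInt : ∀ s ∈ Set.uIcc t₀ t, HasDerivAt (fun x => u₀ * Real.log x) (u₀ / s) s := by
      intro s hs
      rw [Set.uIcc_of_le ht] at hs
      have hs0 : s ≠ 0 := (lt_of_lt_of_le ht₀ hs.1).ne'
      have := (Real.hasDerivAt_log hs0).const_mul u₀
      simpa [div_eq_mul_inv] using this
    have h1 : ∫ s in t₀..t, u₀ / s = u₀ * Real.log t - u₀ * Real.log t₀ := by
      rw [integral_eq_sub_of_hasDerivAt hInt]
      apply ContinuousOn.intervalIntegrable
      apply ContinuousOn.div continuousOn_const continuousOn_id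
      intro s hs
      rw [Set.uIcc_of_le ht] at hs
      exact (lt_of_lt_of_le ht₀ hs.1).ne'
    have h2 : ∫ s in t₀..t, u₀ / s ≤ ∫ s in t₀..t, g s := by
      apply integral_mono_on ht
      · apply ContinuousOn.intervalIntegrable
        apply ContinuousOn.div continuousOn_const continuousOn_id
        intro s hs
        rw [Set.uIcc_of_le ht] at hs
        exact (lt_of_lt_of_le ht₀ hs.1).ne'
      · exact (hgc.intervalIntegrable t₀ t)
      · intro s hs
        rw [hgeq s (Set.mem_Ici.mpr hs.1)]
        have hs0 : 0 < s := lt_of_lt_of_le ht₀ hs.1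
        gcongr
        exact hub s hs.1
    calc u₀ * (Real.log t - Real.log t₀) = u₀ * Real.log t - u₀ * Real.log t₀ := by ring
    _ = ∫ s in t₀..t, u₀ / s := h1.symm
    _ ≤ v t := h2
  have hvtop : Tendsto v atTop atTop := by
    have h1 : Tendsto (fun t => Real.log t - Real.log t₀) atTop atTop := by
      simpa [sub_eq_add_neg] using
        tendsto_atTop_add_const_right atTop (-(Real.log t₀)) Real.tendsto_log_atTop
    refine tendsto_atTop_mono' atTop ?_ (h1.const_mul_atTop hu₀)
    filter_upwards [eventually_ge_atTop t₀] with t ht using hvge t ht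
  have hRtop : Tendsto R atTop atTop := Real.tendsto_exp_atTop.comp hvtop
  rw [NormedAddCommGroup.tendsto_nhds_zero]
  intro ε hε
  set δ := ε * u₀ / (2 * (Ca + 1)) with hδdef
  have hδpos : 0 < δ := by positivity
  obtain ⟨T0, hT0⟩ := eventually_atTop.mp (NormedAddCommGroup.tendsto_nhds_zero.mp hp0 δ hδpos)
  set T := max T0 t₀ with hTdef
  have hTt₀ : t₀ ≤ T := le_max_right _ _
  have hpT : ∀ s, T ≤ s → ‖p s‖ ≤ δ := fun s hs =>
    (hT0 s (le_trans (le_max_left _ _) hs)).le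
  set CT := ∫ s in t₀..T, ‖h s‖ with hCTdef
  have hCT0 : 0 ≤ CT :=
    intervalIntegral.integral_nonneg hTt₀ fun s _ => norm_nonneg _
  have hc0 : 0 ≤ Ca * δ / u₀ := by positivity
  have hbound : ∀ t, T ≤ t → ‖Q t‖ ≤ CT / R t + Ca * δ / u₀ := by
    intro t ht
    have ht₀' : t₀ ≤ t := hTt₀.trans ht
    have key : ‖R t • Q t‖ ≤ CT + Ca * δ / u₀ * R t := by
      rw [hFTC t ht₀']
      have hsplit : (∫ s in t₀..t, h s) = (∫ s in t₀..T, h s) + ∫ s in T..t, h s :=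
        (integral_add_adjacent_intervals (hhc.intervalIntegrable _ _)
          (hhc.intervalIntegrable _ _)).symm
      rw [hsplit]
      have h1 : ‖∫ s in t₀..T, h s‖ ≤ CT :=
        intervalIntegral.norm_integral_le_integral_norm hTt₀
      have hcont2 : Continuous fun s => Ca * δ / u₀ * (Real.exp (v s) * g s) :=
        continuous_const.mul ((Real.continuous_exp.comp hvc).mul hgc)
      have h2 : ‖∫ s in T..t, h s‖ ≤
          ∫ s in T..t, Ca * δ / u₀ * (Real.exp (v s) * g s) := by
        refine (intervalIntegral.norm_integral_le_integral_norm ht).trans ?_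
        apply integral_mono_on ht (hhc.norm.intervalIntegrable _ _)
          (hcont2.intervalIntegrable _ _)
        intro s hs
        have hs₀ : t₀ ≤ s := hTt₀.trans hs.1
        have hspos : 0 < s := ht₀.trans_le hs₀
        rw [hheq s hs₀, hgeq s hs₀]
        have e1 : ‖R s • ((a s / s) • p s)‖ = R s * (|a s / s| * ‖p s‖) := by
          rw [norm_smul, norm_smul, Real.norm_eq_abs, Real.norm_eq_abs,
            abs_of_pos (hRpos s)]
        rw [e1]
        have e2 : |a s / s| ≤ Ca / s := by
          rw [abs_div, abs_of_pos hspos]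
          gcongr
          exact hCa s hs₀
        have e3 : R s * (|a s / s| * ‖p s‖) ≤ R s * (Ca / s * δ) := by
          apply mul_le_mul_of_nonneg_left _ (hRpos s).le
          exact mul_le_mul e2 (hpT s hs.1) (norm_nonneg _) (by positivity)
        refine e3.trans ?_
        have e4 : R s * (Ca / s * δ) = Ca * δ / u₀ * (Real.exp (v s) * (u₀ / s)) := by
          field_simp
          ring
        rw [e4]
        gcongr
        exact hub s hs₀
      have h3 : (∫ s in T..t, Ca * δ / u₀ * (Real.exp (v s) * g s)) =
          Ca * δ / u₀ * (R t - R T) := by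
        rw [intervalIntegral.integral_const_mul,
          integral_eq_sub_of_hasDerivAt (fun s _ => hRd s)
            (((Real.continuous_exp.comp hvc).mul hgc).intervalIntegrable _ _)]
      calc ‖(∫ s in t₀..T, h s) + ∫ s in T..t, h s‖
          ≤ ‖∫ s in t₀..T, h s‖ + ‖∫ s in T..t, h s‖ := norm_add_le _ _
        _ ≤ CT + Ca * δ / u₀ * (R t - R T) := by
            rw [← h3]; exact add_le_add h1 h2
        _ ≤ CT + Ca * δ / u₀ * R t := by
            have : Ca * δ / u₀ * (R t - R T) ≤ Ca * δ / u₀ * R t := by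
              apply mul_le_mul_of_nonneg_left _ hc0
              linarith [hRpos T]
            linarith
    have hnorm : ‖R t • Q t‖ = R t * ‖Q t‖ := by
      rw [norm_smul, Real.norm_eq_abs, abs_of_pos (hRpos t)]
    rw [hnorm] at key
    have h5 : ‖Q t‖ ≤ (CT + Ca * δ / u₀ * R t) / R t := by
      rw [le_div_iff₀ (hRpos t)]
      linarith [key]
    refine h5.trans_eq ?_
    rw [add_div, mul_div_assoc, div_self (hRpos t).ne', mul_one]
  have hlt : Ca * δ / u₀ < ε := by
    have hd : (0:ℝ) < 2 * (Ca + 1) := by positivity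
    have heq : Ca * δ / u₀ = ε * Ca / (2 * (Ca + 1)) := by
      rw [hδdef]; field_simp
    rw [heq, div_lt_iff₀ hd]
    nlinarith [mul_nonneg hε.le hCa0]
  have hdiv0 : Tendsto (fun t => CT / R t) atTop (nhds 0) :=
    tendsto_const_nhds.div_atTop hRtop
  have hpos : 0 < ε - Ca * δ / u₀ := by linarith
  filter_upwards [hdiv0.eventually_lt_const hpos, eventually_ge_atTop T] with t h1 h2
  calc ‖Q t‖ ≤ CT / R t + Ca * δ / u₀ := hbound t h2
    _ < (ε - Ca * δ / u₀) + Ca * δ / u₀ := by linarith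
    _ = ε := by ring
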